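/- Let X be a complete separable metric space and let (P_n) be Borel probability measures on X satisfying a large deviation principle with rate n and rate function I : X → [0,∞] (I lower semicontinuous, closed-set upper bound and open-set lower bound hold). Let F : X → ℝ be bounded and continuous. Then lim_{n→∞} (1/n) log ∫_X e^{nF(x)} P_n(dx) exists and equals sup_{x∈X}[F(x) − I(x)]. -/

import Mathlib

open Filter MeasureTheory Topology

lemma inv_nat_mul_add {n : ℕ} (hn : 1 ≤ n) (a : ℝ) {x : EReal} (hx : x ≠ ⊤) :
    (((n : ℝ)⁻¹ : ℝ) : EReal) * ((a : EReal) + x)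
      = (((n:ℝ)⁻¹ * a : ℝ) : EReal) + (((n : ℝ)⁻¹ : ℝ) : EReal) * x := by
  have hn0 : (0:ℝ) < (n:ℝ)⁻¹ := by
    have : (0:ℝ) < n := by exact_mod_cast hn
    positivity
  induction x using EReal.rec with
  | bot =>
      rw [EReal.add_bot, EReal.coe_mul_bot_of_pos hn0, EReal.add_bot]
  | coe r => norm_cast; ring
  | top => exact absurd rfl hx

lemma key_log {n : ℕ} (hn : 1 ≤ n) (b : ℝ) {p : ENNReal} (hp : p ≠ ⊤) :
    (((n : ℝ)⁻¹ : ℝ) : EReal) * ENNReal.log (ENNReal.ofReal (Real.exp (n * b)) * p)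
      = (b : EReal) + (((n : ℝ)⁻¹ : ℝ) : EReal) * ENNReal.log p := by
  have hlt : ENNReal.log p ≠ ⊤ := by simpa using hp
  rw [ENNReal.log_mul_add, ENNReal.log_ofReal_of_pos (Real.exp_pos _), Real.log_exp,
    inv_nat_mul_add hn _ hlt]
  have hne : (n:ℝ) ≠ 0 := by positivity
  congr 2
  field_simp

/-- Varadhan's lemma: if `(P n)` satisfies an LDP with rate `n` and rate function `I`,
then for every bounded continuous `F`,
`lim_{n→∞} (1/n) log ∫_X e^{nF} dP_n = sup_{x ∈ X} [F x - I x]`. -/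
theorem varadhan_lemma
    {X : Type*} [MetricSpace X] [CompleteSpace X] [TopologicalSpace.SeparableSpace X]
    [MeasurableSpace X] [BorelSpace X]
    (P : ℕ → Measure X) (hP : ∀ n, IsProbabilityMeasure (P n))
    (I : X → ENNReal) (hI : LowerSemicontinuous I)
    (hupper : ∀ C : Set X, IsClosed C →
      Filter.limsup (fun n : ℕ => (((n : ℝ)⁻¹ : ℝ) : EReal) * ENNReal.log (P n C)) atTop
        ≤ -(⨅ x ∈ C, (I x : EReal)))
    (hlower : ∀ O : Set X, IsOpen O →
      -(⨅ x ∈ O, (I x : EReal)) ≤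
        Filter.liminf (fun n : ℕ => (((n : ℝ)⁻¹ : ℝ) : EReal) * ENNReal.log (P n O)) atTop)
    (F : X → ℝ) (hF : Continuous F) (hFb : ∃ M : ℝ, ∀ x, |F x| ≤ M) :
    Filter.Tendsto
      (fun n : ℕ => (((n : ℝ)⁻¹ : ℝ) : EReal) *
        ENNReal.log (∫⁻ x, ENNReal.ofReal (Real.exp (n * F x)) ∂(P n))) atTop
      (𝓝 (⨆ x, ((F x : EReal) - (I x : EReal)))) := by
  obtain ⟨M, hM⟩ := hFb
  have hXne : Nonempty X := by
    by_contra h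
    have hE : IsEmpty X := not_nonempty_iff.mp h
    have h1 : P 0 Set.univ = 1 := (hP 0).measure_univ
    rw [Set.univ_eq_empty_iff.mpr hE, measure_empty] at h1
    exact zero_ne_one h1
  set S : EReal := ⨆ x, ((F x : EReal) - (I x : EReal)) with hS
  set L : ℕ → EReal := fun n => (((n : ℝ)⁻¹ : ℝ) : EReal) *
        ENNReal.log (∫⁻ x, ENNReal.ofReal (Real.exp (n * F x)) ∂(P n)) with hL
  -- S ≤ M
  have hSleM : S ≤ (M : EReal) := by
    apply iSup_le; intro x
    calc (F x : EReal) - (I x : EReal) ≤ (F x : EReal) - 0 :=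
          EReal.sub_le_sub le_rfl (EReal.coe_ennreal_nonneg _)
    _ = (F x : EReal) := by rw [sub_zero]
    _ ≤ (M : EReal) := by exact_mod_cast (abs_le.mp (hM x)).2
  have hSnt : S ≠ ⊤ := (lt_of_le_of_lt hSleM (EReal.coe_lt_top M)).ne
  -- inf I ≤ 0
  have hinf : ⨅ x, (I x : EReal) ≤ 0 := by
    have h0 := hupper Set.univ isClosed_univ
    simp only [measure_univ, ENNReal.log_one, mul_zero, limsup_const] at h0
    rw [← EReal.neg_le_neg_iff, neg_zero]
    simpa using h0
  have hSnb : S ≠ ⊥ := by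
    have h1 : ⨅ x, (I x : EReal) < 1 := lt_of_le_of_lt hinf (by norm_num)
    obtain ⟨x, hx⟩ := iInf_lt_iff.mp h1
    have hxt : (I x : EReal) ≠ ⊤ := hx.ne_top
    have hr : (((I x : EReal).toReal : ℝ) : EReal) = (I x : EReal) :=
      EReal.coe_toReal hxt (EReal.coe_ennreal_ne_bot _)
    have hle : ((F x - (I x : EReal).toReal : ℝ) : EReal) ≤ S := by
      rw [EReal.coe_sub, hr]
      exact le_iSup (fun x => (F x : EReal) - (I x : EReal)) x
    exact ((EReal.bot_lt_coe _).trans_le hle).ne'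
  have hcne : ∀ (n : ℕ) (s : Set X), P n s ≠ ⊤ := fun n s => measure_ne_top _ _
  have hnn : ∀ n : ℕ, (0:EReal) ≤ (((n : ℝ)⁻¹ : ℝ) : EReal) := fun n => by
    apply EReal.coe_nonneg.mpr; positivity
  -- Lower bound
  have lower : S ≤ liminf L atTop := by
    apply iSup_le; intro x
    rw [← EReal.ge_of_forall_gt_iff_ge]
    intro c hc
    have hIx : (I x : EReal) ≠ ⊤ := by
      intro h
      rw [h] at hc
      simp at hc
    set r : ℝ := (I x : EReal).toReal with hrdef
    have hr : ((r : ℝ) : EReal) = (I x : EReal) :=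
      EReal.coe_toReal hIx (EReal.coe_ennreal_ne_bot _)
    have hcr : c + r < F x := by
      rw [← hr] at hc
      have : (c : EReal) < ((F x - r : ℝ) : EReal) := by rwa [EReal.coe_sub]
      have := EReal.coe_lt_coe_iff.mp this
      linarith
    set O : Set X := F ⁻¹' (Set.Ioi (c + r)) with hO
    have hOopen : IsOpen O := isOpen_Ioi.preimage hF
    have hxO : x ∈ O := hcr
    have hev : ∀ᶠ n : ℕ in atTop,
        ((c + r : ℝ) : EReal) + (((n : ℝ)⁻¹ : ℝ) : EReal) * ENNReal.log (P n O) ≤ L n := by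
      filter_upwards [eventually_ge_atTop 1] with n hn
      have hmono : ENNReal.ofReal (Real.exp (n * (c + r))) * P n O
          ≤ ∫⁻ y, ENNReal.ofReal (Real.exp (n * F y)) ∂(P n) := by
        calc ENNReal.ofReal (Real.exp (n * (c + r))) * P n O
            = ∫⁻ _ in O, ENNReal.ofReal (Real.exp (n * (c + r))) ∂(P n) :=
              (setLIntegral_const _ _).symm
          _ ≤ ∫⁻ y in O, ENNReal.ofReal (Real.exp (n * F y)) ∂(P n) := by
              apply setLIntegral_mono' hOopen.measurableSet
              intro y hy
              have : (n : ℝ) * (c + r) ≤ n * F y := by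
                have hy' : c + r < F y := hy
                have : (0:ℝ) ≤ n := by positivity
                nlinarith
              exact ENNReal.ofReal_le_ofReal (Real.exp_le_exp.mpr this)
          _ ≤ _ := setLIntegral_le_lintegral _ _
      have hlog := ENNReal.log_monotone hmono
      rw [hL]
      calc ((c + r : ℝ) : EReal) + (((n : ℝ)⁻¹ : ℝ) : EReal) * ENNReal.log (P n O)
          = (((n : ℝ)⁻¹ : ℝ) : EReal) *
              ENNReal.log (ENNReal.ofReal (Real.exp (n * (c + r))) * P n O) :=
            (key_log hn _ (hcne n O)).symm
        _ ≤ _ := mul_le_mul_of_nonneg_left hlog (hnn n)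
    have hlim : ((-r : ℝ) : EReal) ≤
        liminf (fun n : ℕ => (((n : ℝ)⁻¹ : ℝ) : EReal) * ENNReal.log (P n O)) atTop := by
      refine le_trans ?_ (hlower O hOopen)
      rw [EReal.coe_neg, EReal.neg_le_neg_iff, hr]
      exact iInf₂_le x hxO
    calc (c : EReal) = ((c + r : ℝ) : EReal) + ((-r : ℝ) : EReal) := by
          norm_cast; ring
      _ ≤ ((c + r : ℝ) : EReal) +
          liminf (fun n : ℕ => (((n : ℝ)⁻¹ : ℝ) : EReal) * ENNReal.log (P n O)) atTop :=
          add_le_add_right hlim _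
      _ ≤ liminf (fun n : ℕ => ((c + r : ℝ) : EReal) +
            (((n : ℝ)⁻¹ : ℝ) : EReal) * ENNReal.log (P n O)) atTop := by
          have := EReal.le_liminf_add (f := atTop)
            (u := fun _ : ℕ => ((c + r : ℝ) : EReal))
            (v := fun n : ℕ => (((n : ℝ)⁻¹ : ℝ) : EReal) * ENNReal.log (P n O))
          rwa [liminf_const] at this
      _ ≤ liminf L atTop := liminf_le_liminf hev
  -- Upper bound
  have upper : limsup L atTop ≤ S := by
    rw [← EReal.le_of_forall_lt_iff_le]
    intro z hz
    set s : ℝ := S.toReal with hsdef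
    have hSs : ((s : ℝ) : EReal) = S := EReal.coe_toReal hSnt hSnb
    have hsz : s < z := by
      rw [← hSs] at hz
      exact_mod_cast hz
    set ε : ℝ := z - s with hε
    have hεpos : 0 < ε := sub_pos.mpr hsz
    have hM0 : 0 ≤ M := le_trans (abs_nonneg _) (hM (Classical.arbitrary X))
    set N : ℕ := ⌊2 * M / ε⌋₊ + 1 with hN
    set a : ℕ → ℝ := fun j => -M + j * ε with ha
    set C : ℕ → Set X := fun j => F ⁻¹' (Set.Icc (a j) (a j + ε)) with hC
    have hCclosed : ∀ j, IsClosed (C j) := fun j => isClosed_Icc.preimage hF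
    have hNne : (Finset.range N).Nonempty := ⟨0, Finset.mem_range.mpr (Nat.succ_pos _)⟩
    have hNpos : (0 : ℝ) < (N : ℝ) := by exact_mod_cast Nat.succ_pos _
    have hcover : ∀ y : X, ∃ j ∈ Finset.range N, y ∈ C j := by
      intro y
      have h1 : -M ≤ F y := (abs_le.mp (hM y)).1
      have h2 : F y ≤ M := (abs_le.mp (hM y)).2
      set t : ℝ := (F y + M) / ε with ht
      have ht0 : 0 ≤ t := div_nonneg (by linarith) hεpos.le
      have htle : t ≤ 2 * M / ε := by
        rw [ht]
        exact (div_le_div_iff_of_pos_right hεpos).mpr (by linarith)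
      refine ⟨⌊t⌋₊, Finset.mem_range.mpr ?_, ?_⟩
      · have hfl : ⌊t⌋₊ ≤ ⌊2 * M / ε⌋₊ := Nat.floor_mono htle
        omega
      · have hfl1 : (⌊t⌋₊ : ℝ) ≤ t := Nat.floor_le ht0
        have hfl2 : t < (⌊t⌋₊ : ℝ) + 1 := Nat.lt_floor_add_one t
        have htε : t * ε = F y + M := div_mul_cancel₀ _ hεpos.ne'
        simp only [hC, ha, Set.mem_preimage, Set.mem_Icc]
        constructor
        · nlinarith
        · nlinarith
    set e : ℕ → ℕ → ENNReal := fun n j => ENNReal.ofReal (Real.exp (n * (a j + ε))) with he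
    set w : ℕ → ℕ → EReal := fun j n => ((a j + ε : ℝ) : EReal) +
        (((n : ℝ)⁻¹ : ℝ) : EReal) * ENNReal.log (P n (C j)) with hw
    set u1 : ℕ → EReal := fun n => (((n : ℝ)⁻¹ * Real.log N : ℝ) : EReal) with hu1def
    have hev : ∀ᶠ n : ℕ in atTop,
        L n ≤ u1 n + (Finset.range N).sup' hNne (fun j => w j n) := by
      filter_upwards [eventually_ge_atTop 1] with n hn
      have hpt : ∀ y : X, ENNReal.ofReal (Real.exp (n * F y)) ≤
          ∑ j ∈ Finset.range N, Set.indicator (C j) (fun _ => e n j) y := by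
        intro y
        obtain ⟨j, hjN, hyj⟩ := hcover y
        calc ENNReal.ofReal (Real.exp (n * F y)) ≤ e n j := by
              apply ENNReal.ofReal_le_ofReal
              apply Real.exp_le_exp.mpr
              have hFy : F y ≤ a j + ε :=
                (by simpa [hC, Set.mem_preimage, Set.mem_Icc] using hyj : _ ∧ _).2
              have hn0 : (0:ℝ) ≤ n := by positivity
              nlinarith
          _ = Set.indicator (C j) (fun _ => e n j) y :=
              (Set.indicator_of_mem hyj (fun _ => e n j)).symm
          _ ≤ ∑ j ∈ Finset.range N, Set.indicator (C j) (fun _ => e n j) y :=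
              Finset.single_le_sum (f := fun i => Set.indicator (C i) (fun _ => e n i) y)
                (fun i _ => zero_le) hjN
      set B : ENNReal := (Finset.range N).sup' hNne (fun j => e n j * P n (C j)) with hB
      have hsum : (∫⁻ y, ENNReal.ofReal (Real.exp (n * F y)) ∂(P n)) ≤ (N : ENNReal) * B := by
        calc (∫⁻ y, ENNReal.ofReal (Real.exp (n * F y)) ∂(P n))
            ≤ ∫⁻ y, ∑ j ∈ Finset.range N, Set.indicator (C j) (fun _ => e n j) y ∂(P n) :=
              lintegral_mono hpt
          _ = ∑ j ∈ Finset.range N, ∫⁻ y, Set.indicator (C j) (fun _ => e n j) y ∂(P n) :=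
              lintegral_finset_sum _
                (fun j _ => measurable_const.indicator (hCclosed j).measurableSet)
          _ = ∑ j ∈ Finset.range N, e n j * P n (C j) := by
              refine Finset.sum_congr rfl fun j _ => ?_
              rw [lintegral_indicator (hCclosed j).measurableSet, setLIntegral_const]
          _ ≤ (Finset.range N).card • B :=
              Finset.sum_le_card_nsmul _ _ _
                (fun j hj => by rw [hB]; exact Finset.le_sup' (fun j => e n j * P n (C j)) hj)
          _ = (N : ENNReal) * B := by rw [Finset.card_range, nsmul_eq_mul]
      have hBt : B ≠ ⊤ := by
        rw [← lt_top_iff_ne_top, hB, Finset.sup'_lt_iff]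
        exact fun j hj => ENNReal.mul_lt_top ENNReal.ofReal_lt_top (measure_lt_top _ _)
      have hlogN : ENNReal.log ((N : ENNReal)) = ((Real.log N : ℝ) : EReal) := by
        rw [← ENNReal.ofReal_natCast, ENNReal.log_ofReal_of_pos hNpos]
      have hmono : Monotone (fun x : EReal => (((n : ℝ)⁻¹ : ℝ) : EReal) * x) :=
        fun p q h => mul_le_mul_of_nonneg_left h (hnn n)
      calc L n ≤ (((n : ℝ)⁻¹ : ℝ) : EReal) * ENNReal.log ((N : ENNReal) * B) :=
            mul_le_mul_of_nonneg_left (ENNReal.log_monotone hsum) (hnn n)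
        _ = u1 n + (((n : ℝ)⁻¹ : ℝ) : EReal) * ENNReal.log B := by
            rw [ENNReal.log_mul_add, hlogN,
              inv_nat_mul_add hn _ (by simpa using hBt)]
        _ = u1 n + (Finset.range N).sup' hNne (fun j => w j n) := by
            congr 1
            rw [hB,
              Finset.comp_sup'_eq_sup'_comp hNne ENNReal.log
                (fun x y => ENNReal.log_monotone.map_sup x y),
              Finset.comp_sup'_eq_sup'_comp hNne (fun x : EReal => (((n : ℝ)⁻¹ : ℝ) : EReal) * x)
                (fun x y => hmono.map_sup x y)]
            exact Finset.sup'_congr hNne rfl (fun j hj => key_log hn _ (hcne n _))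
    have hu1 : Tendsto u1 atTop (𝓝 (0 : EReal)) := by
      have h0 : ((0 : ℝ) : EReal) = (0 : EReal) := by norm_cast
      rw [hu1def, ← h0, EReal.tendsto_coe]
      simpa using (tendsto_inv_atTop_nhds_zero_nat (𝕜 := ℝ)).mul_const (Real.log N)
    have hu1limsup : limsup u1 atTop = 0 := hu1.limsup_eq
    calc limsup L atTop
        ≤ limsup (fun n => u1 n + (Finset.range N).sup' hNne (fun j => w j n)) atTop :=
          limsup_le_limsup hev
      _ ≤ limsup u1 atTop + limsup (fun n => (Finset.range N).sup' hNne (fun j => w j n)) atTop := by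
          apply EReal.limsup_add_le
          · rw [hu1limsup]; exact Or.inl (by simp)
          · rw [hu1limsup]; exact Or.inl (by simp)
      _ = limsup (fun n => (Finset.range N).sup' hNne (fun j => w j n)) atTop := by
          rw [hu1limsup, zero_add]
      _ = (Finset.range N).sup' hNne (fun j => limsup (w j) atTop) := limsup_finset_sup' hNne
      _ ≤ (z : EReal) := by
          apply Finset.sup'_le
          intro j hj
          have h1 : limsup (w j) atTop ≤ ((a j + ε : ℝ) : EReal) +
              limsup (fun n : ℕ => (((n : ℝ)⁻¹ : ℝ) : EReal) * ENNReal.log (P n (C j))) atTop := by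
            have h := EReal.limsup_add_le (f := atTop)
              (u := fun _ : ℕ => ((a j + ε : ℝ) : EReal))
              (v := fun n : ℕ => (((n : ℝ)⁻¹ : ℝ) : EReal) * ENNReal.log (P n (C j)))
              (by rw [limsup_const]; exact Or.inl (EReal.coe_ne_bot _))
              (by rw [limsup_const]; exact Or.inl (EReal.coe_ne_top _))
            rwa [limsup_const] at h
          have h3 : ((a j - s : ℝ) : EReal) ≤ ⨅ x ∈ C j, (I x : EReal) := by
            apply le_iInf₂
            intro x hx
            by_cases hIxt : (I x : EReal) = ⊤
            · rw [hIxt]; exact le_top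
            · have hr : (((I x : EReal).toReal : ℝ) : EReal) = (I x : EReal) :=
                EReal.coe_toReal hIxt (EReal.coe_ennreal_ne_bot _)
              have hFIS : (F x : EReal) - (I x : EReal) ≤ ((s : ℝ) : EReal) := by
                rw [hSs]
                exact le_iSup (fun x => (F x : EReal) - (I x : EReal)) x
              rw [← hr, ← EReal.coe_sub] at hFIS
              have hreal := EReal.coe_le_coe_iff.mp hFIS
              have haj : a j ≤ F x :=
                (by simpa [hC, Set.mem_preimage, Set.mem_Icc] using hx : _ ∧ _).1
              rw [← hr]
              exact EReal.coe_le_coe_iff.mpr (by linarith)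
          calc limsup (w j) atTop
              ≤ ((a j + ε : ℝ) : EReal) + -(⨅ x ∈ C j, (I x : EReal)) :=
                le_trans h1 (add_le_add_right (hupper (C j) (hCclosed j)) _)
            _ ≤ ((a j + ε : ℝ) : EReal) + ((s - a j : ℝ) : EReal) := by
                apply add_le_add_right
                rw [EReal.neg_le, ← EReal.coe_neg, (show -(s - a j) = a j - s by ring)]
                exact h3
            _ = (z : EReal) := by
                rw [← EReal.coe_add]
                exact EReal.coe_eq_coe_iff.mpr (by rw [hε]; ring)
  exact tendsto_of_le_liminf_of_limsup_le lower upper
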